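/- L-stability asymptotics: let n ≥ 1, let A be an invertible real n×n matrix and w ∈ ℝⁿ such that the matrix A − 𝟙⊗w (entries A_pq − w_q) is singular. Then the polynomial z ↦ det(Iₙ − z·A + z·(𝟙⊗w)) has degree at most n − 1, while the polynomial z ↦ det(Iₙ − z·A) has degree exactly n; consequently the stability function R(z) := det(Iₙ − z·A + z·(𝟙⊗w))/det(Iₙ − z·A) (viewed for complex z outside the finitely many zeros of the denominator) tends to 0 as |z| → ∞. -/

import Mathlib

open Matrix Filter

section LstabAux
open Polynomial

private lemma eval_charpolyRev' {n : ℕ} {R : Type*} [CommRing R]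
    (M : Matrix (Fin n) (Fin n) R) (z : R) :
    (M.charpolyRev).eval z = ((1 : Matrix (Fin n) (Fin n) R) - z • M).det := by
  rw [Matrix.charpolyRev, ← coe_evalRingHom, RingHom.map_det]
  congr 1
  ext p q
  simp only [RingHom.mapMatrix_apply, Matrix.map_apply, Matrix.one_apply, Matrix.sub_apply,
    Matrix.smul_apply, smul_eq_mul, eval_sub, eval_mul, eval_X, eval_C, apply_ite (eval z),
    eval_one, eval_zero, coe_evalRingHom]

private lemma degree_charpolyRev_le {n : ℕ} {K : Type*} [Field K]
    (M : Matrix (Fin n) (Fin n) K) :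
    (M.charpolyRev).degree ≤ (n : WithBot ℕ) := by
  rw [← Matrix.reverse_charpoly]
  refine (degree_le_natDegree).trans ?_
  exact_mod_cast Nat.cast_le.mpr ((reverse_natDegree_le _).trans (by
    simp [Matrix.charpoly_natDegree_eq_dim]))

private lemma coeff_charpolyRev_n {n : ℕ} {K : Type*} [Field K]
    (M : Matrix (Fin n) (Fin n) K) :
    (M.charpolyRev).coeff n = (-1 : K) ^ n * M.det := by
  rw [← Matrix.reverse_charpoly, coeff_reverse]
  have h1 : M.charpoly.natDegree = n := by simp [Matrix.charpoly_natDegree_eq_dim]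
  rw [h1, revAt_le (le_refl n), Nat.sub_self]
  have hdet := Matrix.det_eq_sign_charpoly_coeff M
  rw [Fintype.card_fin] at hdet
  rw [hdet]; ring_nf
  rw [pow_mul]
  have : ((-1 : K) ^ n) ^ 2 = 1 := by
    rw [← pow_mul, mul_comm, pow_mul]; norm_num
  rw [this, mul_one]

private lemma tendsto_eval_div_pow (p : Polynomial ℂ) (m : ℕ) (hp : p.natDegree ≤ m) :
    Tendsto (fun z : ℂ => p.eval z / z ^ m) (cocompact ℂ) (nhds (p.coeff m)) := by
  have hz : ∀ᶠ z : ℂ in cocompact ℂ, z ≠ 0 := by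
    have h0 : ({0}ᶜ : Set ℂ) ∈ cocompact ℂ :=
      mem_cocompact.mpr ⟨{0}, isCompact_singleton, subset_rfl⟩
    filter_upwards [h0] with z hz0
    simpa using hz0
  have key : Tendsto (fun z : ℂ => ∑ i ∈ Finset.range (m + 1), p.coeff i * (z ^ (m - i))⁻¹)
      (cocompact ℂ) (nhds (∑ i ∈ Finset.range (m + 1), if i = m then p.coeff m else 0)) := by
    refine tendsto_finset_sum _ fun i hi => ?_
    rcases eq_or_ne i m with rfl | hne
    · simp only [Nat.sub_self, pow_zero, inv_one, mul_one, if_pos rfl]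
      exact tendsto_const_nhds
    · rw [if_neg hne]
      have hmi : m - i ≠ 0 := by
        have : i < m := lt_of_le_of_ne (Nat.lt_succ_iff.mp (Finset.mem_range.mp hi)) hne
        omega
      have hinv : Tendsto (fun z : ℂ => (z ^ (m - i))⁻¹) (cocompact ℂ) (nhds 0) := by
        rw [tendsto_zero_iff_norm_tendsto_zero]
        simp only [norm_inv, norm_pow]
        exact Tendsto.inv_tendsto_atTop
          ((tendsto_pow_atTop hmi).comp tendsto_norm_cocompact_atTop)
      simpa using hinv.const_mul (p.coeff i)
  have hsum : (∑ i ∈ Finset.range (m + 1), if i = m then p.coeff m else 0) = p.coeff m := by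
    rw [Finset.sum_ite_eq' (Finset.range (m + 1)) m fun _ => p.coeff m,
      if_pos (Finset.self_mem_range_succ m)]
  rw [hsum] at key
  refine key.congr' ?_
  filter_upwards [hz] with z hz0
  rw [Polynomial.eval_eq_sum_range' (Nat.lt_succ_of_le hp), Finset.sum_div]
  refine Finset.sum_congr rfl fun i hi => ?_
  have hile : i ≤ m := Nat.lt_succ_iff.mp (Finset.mem_range.mp hi)
  rw [mul_div_assoc]
  congr 1
  have hzm : z ^ m = z ^ i * z ^ (m - i) := by
    rw [← pow_add, Nat.add_sub_cancel' hile]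
  rw [hzm, div_mul_cancel_left₀ (pow_ne_zero _ hz0)]

private lemma tendsto_div_cocompact (p q : Polynomial ℂ) (h : p.degree < q.degree) :
    Tendsto (fun z : ℂ => p.eval z / q.eval z) (cocompact ℂ) (nhds 0) := by
  have hq0 : q ≠ 0 := by
    rintro rfl
    simp only [degree_zero] at h
    exact (not_lt_bot h)
  set m := q.natDegree with hm
  have hqdeg : q.degree = (m : WithBot ℕ) := degree_eq_natDegree hq0
  have hpm : p.natDegree ≤ m := natDegree_le_natDegree (le_of_lt h)
  have h1 := tendsto_eval_div_pow p m hpm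
  have hcoeffp : p.coeff m = 0 := coeff_eq_zero_of_degree_lt (by rw [← hqdeg]; exact h)
  have h2 := tendsto_eval_div_pow q m le_rfl
  have hlc : q.coeff m ≠ 0 := by
    rw [hm, ← leadingCoeff]
    exact leadingCoeff_ne_zero.mpr hq0
  have hdiv := h1.div h2 hlc
  rw [hcoeffp, zero_div] at hdiv
  refine hdiv.congr' ?_
  have h0 : ({0}ᶜ : Set ℂ) ∈ cocompact ℂ :=
    mem_cocompact.mpr ⟨{0}, isCompact_singleton, subset_rfl⟩
  filter_upwards [h0] with z hz0
  have hz0' : z ≠ 0 := by simpa using hz0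
  have hzm : z ^ m ≠ 0 := pow_ne_zero _ hz0'
  by_cases hq : q.eval z = 0
  · simp [hq]
  · rw [Pi.div_apply]
    field_simp

end LstabAux

/-- L-stability asymptotics: if `A` is an invertible real `n × n` matrix and the matrix
`A − 𝟙⊗w` is singular, then `z ↦ det (I − z A + z 𝟙⊗w)` is a polynomial of degree at
most `n − 1`, `z ↦ det (I − z A)` is a polynomial of degree exactly `n`, and the
stability function `R(z)` tends to `0` as `|z| → ∞` in `ℂ`. -/
theorem Lstability_asymptotics (n : ℕ) (hn : 1 ≤ n)
    (A : Matrix (Fin n) (Fin n) ℝ) (w : Fin n → ℝ)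
    (hA : IsUnit A.det)
    (hsing : (Matrix.of fun p q => A p q - w q).det = 0) :
    (∃ P : Polynomial ℝ,
      (∀ z : ℝ, P.eval z =
        ((1 : Matrix (Fin n) (Fin n) ℝ) - z • A + z • Matrix.of fun _ q => w q).det) ∧
      P.degree ≤ ((n - 1 : ℕ) : WithBot ℕ)) ∧
    (∃ Q : Polynomial ℝ,
      (∀ z : ℝ, Q.eval z = ((1 : Matrix (Fin n) (Fin n) ℝ) - z • A).det) ∧
      Q.degree = (n : WithBot ℕ)) ∧
    Tendsto
      (fun z : ℂ =>
        ((1 : Matrix (Fin n) (Fin n) ℂ) - z • A.map (Complex.ofReal)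
            + z • Matrix.of fun _ q => ((w q : ℝ) : ℂ)).det /
          ((1 : Matrix (Fin n) (Fin n) ℂ) - z • A.map (Complex.ofReal)).det)
      (cocompact ℂ) (nhds 0) := by
  set W : Matrix (Fin n) (Fin n) ℝ := Matrix.of fun _ q => w q with hW
  set B : Matrix (Fin n) (Fin n) ℝ := A - W with hBdef
  have hB : B.det = 0 := by
    have : B = Matrix.of fun p q => A p q - w q := by
      ext p q; simp [hBdef, hW, Matrix.sub_apply]
    rw [this]; exact hsing
  have hmat : ∀ z : ℝ, (1 : Matrix (Fin n) (Fin n) ℝ) - z • B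
      = (1 : Matrix (Fin n) (Fin n) ℝ) - z • A + z • W := by
    intro z
    rw [hBdef, smul_sub]
    abel
  -- degree helper
  have hdegsub : ∀ {K : Type} [Field K], ∀ (M : Matrix (Fin n) (Fin n) K), M.det = 0 →
      (M.charpolyRev).degree ≤ ((n - 1 : ℕ) : WithBot ℕ) := by
    intro K _ M hM
    have hle := degree_charpolyRev_le M
    have hc : (M.charpolyRev).coeff n = 0 := by
      rw [coeff_charpolyRev_n, hM, mul_zero]
    refine (Polynomial.degree_le_iff_coeff_zero _ _).mpr fun m hm => ?_
    have hm' : n - 1 < m := by exact_mod_cast hm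
    have hnm : n ≤ m := by omega
    rcases eq_or_lt_of_le hnm with rfl | hlt
    · exact hc
    · exact (Polynomial.degree_le_iff_coeff_zero _ _).mp hle m (by exact_mod_cast hlt)
  refine ⟨⟨B.charpolyRev, fun z => ?_, hdegsub B hB⟩,
    ⟨A.charpolyRev, fun z => by rw [eval_charpolyRev'], ?_⟩, ?_⟩
  · rw [eval_charpolyRev', hmat z]
  · -- degree Q = n
    refine Polynomial.degree_eq_of_le_of_coeff_ne_zero (degree_charpolyRev_le A) ?_
    rw [coeff_charpolyRev_n]
    exact mul_ne_zero (pow_ne_zero _ (by norm_num)) (hA.ne_zero)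
  · -- complex part
    set Ac : Matrix (Fin n) (Fin n) ℂ := A.map Complex.ofReal with hAc
    set Bc : Matrix (Fin n) (Fin n) ℂ := B.map Complex.ofReal with hBc
    have hmapdet : ∀ M : Matrix (Fin n) (Fin n) ℝ,
        (M.map Complex.ofReal).det = ((M.det : ℝ) : ℂ) := by
      intro M
      have h := (RingHom.map_det Complex.ofRealHom M).symm
      rw [RingHom.mapMatrix_apply] at h
      exact h
    have hBcdet : Bc.det = 0 := by
      rw [hBc, hmapdet, hB, Complex.ofReal_zero]
    have hAcdet : Ac.det ≠ 0 := by
      rw [hAc, hmapdet]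
      simpa using hA.ne_zero
    have hdegP : (Bc.charpolyRev).degree ≤ ((n - 1 : ℕ) : WithBot ℕ) := hdegsub Bc hBcdet
    have hdegQ : (Ac.charpolyRev).degree = (n : WithBot ℕ) := by
      refine Polynomial.degree_eq_of_le_of_coeff_ne_zero (degree_charpolyRev_le Ac) ?_
      rw [coeff_charpolyRev_n]
      exact mul_ne_zero (pow_ne_zero _ (by norm_num)) hAcdet
    have hlt : (Bc.charpolyRev).degree < (Ac.charpolyRev).degree := by
      rw [hdegQ]
      exact lt_of_le_of_lt hdegP (by exact_mod_cast Nat.sub_lt hn one_pos)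
    have htend := tendsto_div_cocompact _ _ hlt
    refine htend.congr fun z => ?_
    rw [eval_charpolyRev', eval_charpolyRev']
    congr 2
    have : Bc = Ac - Matrix.of fun _ q => ((w q : ℝ) : ℂ) := by
      ext p q
      simp [hBc, hAc, hBdef, hW, Matrix.sub_apply, Matrix.map_apply]
    rw [this, smul_sub]
    abel
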